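/- (Sum exchange with partial-sum denominators) Let λ ∈ [0,1), let T ≥ 1, and let a_1, …, a_T be nonnegative real numbers. Then Σ_{t=1}^T Σ_{j=1}^t λ^{t−j}·a_j/√(Σ_{k=1}^j a_k) ≤ (1/(1−λ))·Σ_{t=1}^T a_t/√(Σ_{k=1}^t a_k) ≤ (2/(1−λ))·√(Σ_{t=1}^T a_t), where any term with zero denominator is interpreted as 0 (convention x/0 = 0). -/

import Mathlib

lemma geom_bound_aux (lam : ℝ) (h0 : 0 ≤ lam) (h1 : lam < 1) (n : ℕ) :
    ∑ i ∈ Finset.range n, lam ^ i ≤ 1 / (1 - lam) := by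
  have hpos : 0 < 1 - lam := by linarith
  have h := geom_sum_eq (ne_of_lt h1) n
  rw [h]
  have heq : (lam ^ n - 1) / (lam - 1) = (1 - lam ^ n) / (1 - lam) := by
    rw [← neg_div_neg_eq]; ring_nf
  rw [heq]
  have hp : (0:ℝ) ≤ lam ^ n := pow_nonneg h0 n
  gcongr
  linarith

lemma key_sqrt (s x : ℝ) (hs : 0 ≤ s) (hx : 0 ≤ x) :
    x / Real.sqrt (s + x) ≤ 2 * Real.sqrt (s + x) - 2 * Real.sqrt s := by
  rcases eq_or_lt_of_le (by linarith : (0:ℝ) ≤ s + x) with h | h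
  · have hx0 : x = 0 := by linarith
    have hs0 : s = 0 := by linarith
    simp [hx0, hs0]
  · have hu : 0 < Real.sqrt (s + x) := Real.sqrt_pos.mpr h
    have hu2 : Real.sqrt (s + x) ^ 2 = s + x := Real.sq_sqrt h.le
    have hv2 : Real.sqrt s ^ 2 = s := Real.sq_sqrt hs
    have hv : 0 ≤ Real.sqrt s := Real.sqrt_nonneg s
    rw [div_le_iff₀ hu]
    nlinarith [sq_nonneg (Real.sqrt (s + x) - Real.sqrt s)]

lemma sum_div_sqrt_le (a : ℕ → ℝ) (n : ℕ) (ha : ∀ t ∈ Finset.Icc 1 n, 0 ≤ a t) :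
    ∑ t ∈ Finset.Icc 1 n, a t / Real.sqrt (∑ k ∈ Finset.Icc 1 t, a k)
      ≤ 2 * Real.sqrt (∑ k ∈ Finset.Icc 1 n, a k) := by
  induction n with
  | zero => simp
  | succ n ih =>
    have ha' : ∀ t ∈ Finset.Icc 1 n, 0 ≤ a t := fun t ht => by
      apply ha; simp at ht ⊢; omega
    have hS : 0 ≤ ∑ k ∈ Finset.Icc 1 n, a k :=
      Finset.sum_nonneg ha'
    have han : 0 ≤ a (n + 1) := ha (n + 1) (by simp)
    rw [Finset.sum_Icc_succ_top (by omega : 1 ≤ n + 1),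
        Finset.sum_Icc_succ_top (by omega : 1 ≤ n + 1)]
    have := key_sqrt (∑ k ∈ Finset.Icc 1 n, a k) (a (n + 1)) hS han
    have h2 := ih ha'
    linarith

theorem sum_exchange_partial_sums (lam : ℝ) (hlam0 : 0 ≤ lam) (hlam1 : lam < 1)
    (T : ℕ) (hT : 1 ≤ T) (a : ℕ → ℝ) (ha : ∀ t ∈ Finset.Icc 1 T, 0 ≤ a t) :
    (∑ t ∈ Finset.Icc 1 T, ∑ j ∈ Finset.Icc 1 t,
        lam ^ (t - j) * a j / Real.sqrt (∑ k ∈ Finset.Icc 1 j, a k)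
      ≤ (1 / (1 - lam)) * ∑ t ∈ Finset.Icc 1 T,
          a t / Real.sqrt (∑ k ∈ Finset.Icc 1 t, a k)) ∧
    ((1 / (1 - lam)) * ∑ t ∈ Finset.Icc 1 T,
          a t / Real.sqrt (∑ k ∈ Finset.Icc 1 t, a k)
      ≤ (2 / (1 - lam)) * Real.sqrt (∑ t ∈ Finset.Icc 1 T, a t)) := by
  have hpos : 0 < 1 - lam := by linarith
  have hb : ∀ j, 0 ≤ a j / Real.sqrt (∑ k ∈ Finset.Icc 1 j, a k) → True := fun _ _ => trivial
  constructor
  · -- swap sums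
    have hswap : ∑ t ∈ Finset.Icc 1 T, ∑ j ∈ Finset.Icc 1 t,
          lam ^ (t - j) * a j / Real.sqrt (∑ k ∈ Finset.Icc 1 j, a k)
        = ∑ j ∈ Finset.Icc 1 T, ∑ t ∈ Finset.Icc j T,
          lam ^ (t - j) * a j / Real.sqrt (∑ k ∈ Finset.Icc 1 j, a k) := by
      rw [Finset.sum_sigma', Finset.sum_sigma']
      refine Finset.sum_nbij' (fun x => ⟨x.2, x.1⟩) (fun x => ⟨x.2, x.1⟩) ?_ ?_
        (fun _ _ => rfl) (fun _ _ => rfl) (fun _ _ => rfl) <;>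
      simp only [Finset.mem_Icc, Sigma.forall, Finset.mem_sigma] <;>
      rintro a b ⟨⟨h₁, h₂⟩, h₃, h₄⟩ <;> omega
    rw [hswap]
    have hmain : ∀ j ∈ Finset.Icc 1 T,
        ∑ t ∈ Finset.Icc j T, lam ^ (t - j) * a j / Real.sqrt (∑ k ∈ Finset.Icc 1 j, a k)
          ≤ (1 / (1 - lam)) * (a j / Real.sqrt (∑ k ∈ Finset.Icc 1 j, a k)) := by
      intro j hj
      have hbj : 0 ≤ a j / Real.sqrt (∑ k ∈ Finset.Icc 1 j, a k) :=
        div_nonneg (ha j hj) (Real.sqrt_nonneg _)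
      have : ∑ t ∈ Finset.Icc j T, lam ^ (t - j) * a j / Real.sqrt (∑ k ∈ Finset.Icc 1 j, a k)
          = (∑ t ∈ Finset.Icc j T, lam ^ (t - j)) * (a j / Real.sqrt (∑ k ∈ Finset.Icc 1 j, a k)) := by
        rw [Finset.sum_mul]
        apply Finset.sum_congr rfl
        intro t _
        rw [mul_div_assoc]
      rw [this]
      apply mul_le_mul_of_nonneg_right _ hbj
      have : ∑ t ∈ Finset.Icc j T, lam ^ (t - j) = ∑ i ∈ Finset.range (T + 1 - j), lam ^ i := by
        rw [← Finset.Ico_add_one_right_eq_Icc, Finset.sum_Ico_eq_sum_range]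
        apply Finset.sum_congr rfl
        intro i _
        congr 1
        omega
      rw [this]
      exact geom_bound_aux lam hlam0 hlam1 _
    calc ∑ j ∈ Finset.Icc 1 T, ∑ t ∈ Finset.Icc j T,
          lam ^ (t - j) * a j / Real.sqrt (∑ k ∈ Finset.Icc 1 j, a k)
        ≤ ∑ j ∈ Finset.Icc 1 T, (1 / (1 - lam)) * (a j / Real.sqrt (∑ k ∈ Finset.Icc 1 j, a k)) :=
          Finset.sum_le_sum hmain
      _ = (1 / (1 - lam)) * ∑ t ∈ Finset.Icc 1 T,
          a t / Real.sqrt (∑ k ∈ Finset.Icc 1 t, a k) := by rw [Finset.mul_sum]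
  · have h := sum_div_sqrt_le a T ha
    have h1 : (0:ℝ) ≤ 1 / (1 - lam) := by positivity
    have : (2 / (1 - lam)) * Real.sqrt (∑ t ∈ Finset.Icc 1 T, a t)
        = (1 / (1 - lam)) * (2 * Real.sqrt (∑ t ∈ Finset.Icc 1 T, a t)) := by ring
    rw [this]
    exact mul_le_mul_of_nonneg_left h h1
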